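/- Let R be a commutative Noetherian ring and *R its ultrapower over an ultrafilter. Then the nilradical of *R equals the extension of the nilradical of R, i.e. nil(*R) = nil(R)·*R; equivalently, for any ideal I of R, √(I·*R) = (√I)·*R. -/

import Mathlib

open Filter

/-- The diagonal embedding of `R` into its ultrapower `*R = (ι → R)/U`. -/
noncomputable def diag {ι : Type*} (U : Ultrafilter ι) (R : Type*) [CommRing R] :
    R →+* Filter.Germ (U : Filter ι) R :=
  (Filter.Germ.coeRingHom (U : Filter ι)).comp (Pi.constRingHom ι R)

section Aux

variable {ι R : Type*} [CommRing R] (U : Ultrafilter ι)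

/-- The ideal of germs that lie a.e. in `J`. -/
def aeIdeal (J : Ideal R) : Ideal (Filter.Germ (U : Filter ι) R) where
  carrier := {x | x.LiftPred (· ∈ J)}
  zero_mem' := by
    show Filter.Germ.LiftPred _ ((0 : ι → R) : Filter.Germ (U : Filter ι) R)
    rw [Filter.Germ.liftPred_coe]
    exact Eventually.of_forall fun _ => J.zero_mem
  add_mem' {a b} ha hb := by
    induction a using Filter.Germ.inductionOn with | h f =>
    induction b using Filter.Germ.inductionOn with | h g =>
    rw [← Filter.Germ.coe_add]
    rw [Set.mem_setOf_eq, Filter.Germ.liftPred_coe] at *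
    filter_upwards [ha, hb] with i h1 h2 using J.add_mem h1 h2
  smul_mem' c x hx := by
    induction c using Filter.Germ.inductionOn with | h f =>
    induction x using Filter.Germ.inductionOn with | h g =>
    show Filter.Germ.LiftPred (· ∈ J) (((fun i => f i * g i : ι → R)) : Filter.Germ (U : Filter ι) R)
    rw [Set.mem_setOf_eq, Filter.Germ.liftPred_coe] at hx
    rw [Filter.Germ.liftPred_coe]
    filter_upwards [hx] with i h using J.mul_mem_left _ h

lemma coe_mem_aeIdeal_iff (J : Ideal R) (g : ι → R) :
    (g : Filter.Germ (U : Filter ι) R) ∈ aeIdeal U J ↔ ∀ᶠ i in U, g i ∈ J :=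
  Filter.Germ.liftPred_coe

lemma map_eq_aeIdeal (J : Ideal R) (hJ : J.FG) :
    J.map (diag U R) = aeIdeal U J := by
  apply le_antisymm
  · rw [Ideal.map_le_iff_le_comap]
    intro a ha
    show ((fun _ => a : ι → R) : Filter.Germ (U : Filter ι) R) ∈ aeIdeal U J
    rw [coe_mem_aeIdeal_iff]
    exact Eventually.of_forall fun _ => ha
  · intro x hx
    induction x using Filter.Germ.inductionOn with | h g =>
    rw [coe_mem_aeIdeal_iff] at hx
    obtain ⟨s, hs⟩ := hJ
    -- choose coefficients pointwise
    have hchoice : ∀ i : ι, g i ∈ J → ∃ c : R → R, ∑ a ∈ s, c a * a = g i := by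
      intro i hi
      rw [← hs] at hi
      obtain ⟨f, -, hf⟩ := Submodule.mem_span_finset.mp hi
      exact ⟨f, by simpa [smul_eq_mul] using hf⟩
    choose c hc using hchoice
    classical
    have key : (g : Filter.Germ (U : Filter ι) R)
        = ∑ a ∈ s, ((fun i => if h : g i ∈ J then c i h a else 0 : ι → R)
            : Filter.Germ (U : Filter ι) R) * diag U R a := by
      have : ∀ a : R, ((fun i => if h : g i ∈ J then c i h a else 0 : ι → R)
            : Filter.Germ (U : Filter ι) R) * diag U R a
          = ((fun i => (if h : g i ∈ J then c i h a else 0) * a : ι → R)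
            : Filter.Germ (U : Filter ι) R) := fun a => rfl
      simp only [this]
      have hsum : (∑ a ∈ s, (((fun i => (if h : g i ∈ J then c i h a else 0) * a) : ι → R)
            : Filter.Germ (U : Filter ι) R))
          = (((fun i => ∑ a ∈ s, (if h : g i ∈ J then c i h a else 0) * a) : ι → R)
            : Filter.Germ (U : Filter ι) R) := by
        have hcoe : ∀ h : ι → R, (h : Filter.Germ (U : Filter ι) R)
            = Filter.Germ.coeRingHom (U : Filter ι) h := fun _ => rfl
        simp only [hcoe]
        rw [← map_sum]
        congr 1
        ext i
        simp [Finset.sum_apply]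
      rw [hsum]
      apply Filter.Germ.coe_eq.mpr
      filter_upwards [hx] with i hi
      simp only [dif_pos hi]
      exact (hc i hi).symm
    rw [key]
    refine Ideal.sum_mem _ fun a ha => Ideal.mul_mem_left _ _ ?_
    exact Ideal.mem_map_of_mem _ (hs ▸ Ideal.subset_span (Finset.mem_coe.mpr ha))

end Aux

/-- For a commutative Noetherian ring `R` with ultrapower `*R`: the nilradical of `*R` is
the extension of the nilradical of `R`, and for any ideal `I ⊆ R` the radical of the
extension `I·*R` is the extension of the radical `√I`. -/
theorem ultrapower_nilradical_and_radical {ι R : Type*} [CommRing R] [IsNoetherianRing R]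
    (U : Ultrafilter ι) :
    nilradical (Filter.Germ (U : Filter ι) R) = (nilradical R).map (diag U R) ∧
    ∀ I : Ideal R, (I.map (diag U R)).radical = I.radical.map (diag U R) := by
  have main : ∀ I : Ideal R, (I.map (diag U R)).radical = I.radical.map (diag U R) := by
    intro I
    have hIfg : I.FG := IsNoetherian.noetherian I
    have hrfg : I.radical.FG := IsNoetherian.noetherian I.radical
    obtain ⟨N, hN⟩ := Ideal.exists_radical_pow_le_of_fg I hrfg
    rw [map_eq_aeIdeal U I hIfg, map_eq_aeIdeal U I.radical hrfg]
    ext x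
    induction x using Filter.Germ.inductionOn with | h g =>
    constructor
    · rintro ⟨n, hn⟩
      have : ((g : Filter.Germ (U : Filter ι) R)) ^ n
          = ((fun i => g i ^ n : ι → R) : Filter.Germ (U : Filter ι) R) := rfl
      rw [this, coe_mem_aeIdeal_iff] at hn
      rw [coe_mem_aeIdeal_iff]
      filter_upwards [hn] with i hi using ⟨n, hi⟩
    · intro hg
      rw [coe_mem_aeIdeal_iff] at hg
      refine ⟨N, ?_⟩
      have : ((g : Filter.Germ (U : Filter ι) R)) ^ N
          = ((fun i => g i ^ N : ι → R) : Filter.Germ (U : Filter ι) R) := rfl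
      rw [this, coe_mem_aeIdeal_iff]
      filter_upwards [hg] with i hi
      exact hN (Ideal.pow_mem_pow hi N)
  refine ⟨?_, main⟩
  simpa [nilradical, Ideal.map_bot] using main ⊥
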